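/- Let δ be a real number with 0 < δ < 1 and let C be a positive integer. Let 𝒜 be a finite set of colors with |𝒜| < (2 − δ)·C and let 𝒞 ⊆ 𝒜 with |𝒞| = C. Let U be a finite set with 2 ≤ |U| < 80/δ², and for each v ∈ U let L(v) ⊆ 𝒜 be a set with |L(v)| = C. Suppose that for every color c ∈ 𝒞 there exists v ∈ U with c ∉ L(v). Then there exist two distinct elements u, v ∈ U with |L(u) ∖ 𝒞| > δ³·C/80 and |L(v) ∖ 𝒞| > δ³·C/80. -/

import Mathlib

theorem small_part_two_long_reduced_lists (δ : ℝ) (hδ0 : 0 < δ) (hδ1 : δ < 1)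
    (C : ℕ) (hC : 0 < C) {α : Type*} [DecidableEq α]
    (A : Finset α) (hA : (A.card : ℝ) < (2 - δ) * C)
    (Cs : Finset α) (hCsA : Cs ⊆ A) (hCsC : Cs.card = C)
    {V : Type*} [DecidableEq V] (U : Finset V)
    (hU2 : 2 ≤ U.card) (hU80 : (U.card : ℝ) < 80 / δ ^ 2)
    (L : V → Finset α) (hLA : ∀ v ∈ U, L v ⊆ A) (hLC : ∀ v ∈ U, (L v).card = C)
    (hmiss : ∀ c ∈ Cs, ∃ v ∈ U, c ∉ L v) :
    ∃ u ∈ U, ∃ v ∈ U, u ≠ v ∧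
      δ ^ 3 * C / 80 < (((L u) \ Cs).card : ℝ) ∧
      δ ^ 3 * C / 80 < (((L v) \ Cs).card : ℝ) := by
  classical
  set t : ℝ := δ ^ 3 * C / 80 with htdef
  have ht0 : (0:ℝ) < t := by positivity
  set p : V → Prop := fun v => t < (((L v) \ Cs).card : ℝ) with hpdef
  have hcard : 2 ≤ (U.filter p).card := by
    by_contra h
    push_neg at h
    have hS1 : ((U.filter p).card : ℝ) ≤ 1 := by
      have : (U.filter p).card ≤ 1 := by omega
      exact_mod_cast this
    -- swap cards
    have hswap : ∀ v ∈ U, (Cs \ L v).card = (L v \ Cs).card := by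
      intro v hv
      have h1 := Finset.card_sdiff_add_card_inter Cs (L v)
      have h2 := Finset.card_sdiff_add_card_inter (L v) Cs
      rw [Finset.inter_comm] at h2
      have h3 := hLC v hv
      omega
    have hsub : Cs ⊆ U.biUnion (fun v => Cs \ L v) := by
      intro c hc
      obtain ⟨v, hv, hcv⟩ := hmiss c hc
      exact Finset.mem_biUnion.2 ⟨v, hv, Finset.mem_sdiff.2 ⟨hc, hcv⟩⟩
    have hlow : (C : ℕ) ≤ ∑ v ∈ U, (L v \ Cs).card := by
      calc C = Cs.card := hCsC.symm
        _ ≤ (U.biUnion fun v => Cs \ L v).card := Finset.card_le_card hsub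
        _ ≤ ∑ v ∈ U, (Cs \ L v).card := Finset.card_biUnion_le
        _ = ∑ v ∈ U, (L v \ Cs).card := Finset.sum_congr rfl hswap
    have hlowR : (C:ℝ) ≤ ∑ v ∈ U, ((L v \ Cs).card : ℝ) := by
      push_cast
      exact_mod_cast hlow
    have hsplit : ∑ v ∈ U.filter p, ((L v \ Cs).card : ℝ)
        + ∑ v ∈ U.filter (fun v => ¬ p v), ((L v \ Cs).card : ℝ)
        = ∑ v ∈ U, ((L v \ Cs).card : ℝ) :=
      Finset.sum_filter_add_sum_filter_not U p _
    -- bound on big terms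
    have hM0 : (0:ℝ) ≤ (A.card : ℝ) - C := by
      have : Cs.card ≤ A.card := Finset.card_le_card hCsA
      have : (C:ℝ) ≤ A.card := by rw [← hCsC]; exact_mod_cast this
      linarith
    have hbig : ∑ v ∈ U.filter p, ((L v \ Cs).card : ℝ) ≤ (A.card : ℝ) - C := by
      have hterm : ∀ v ∈ U.filter p, ((L v \ Cs).card : ℝ) ≤ (A.card : ℝ) - C := by
        intro v hv
        have hvU : v ∈ U := (Finset.mem_filter.1 hv).1
        have hss : L v \ Cs ⊆ A \ Cs := Finset.sdiff_subset_sdiff (hLA v hvU) le_rfl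
        have hc1 : (L v \ Cs).card ≤ (A \ Cs).card := Finset.card_le_card hss
        have hc2 : (A \ Cs).card = A.card - Cs.card := Finset.card_sdiff_of_subset hCsA
        have hc3 : Cs.card ≤ A.card := Finset.card_le_card hCsA
        have : ((L v \ Cs).card : ℝ) ≤ ((A.card : ℕ) : ℝ) - (Cs.card : ℝ) := by
          rw [hc2] at hc1
          have := (Nat.cast_le (α := ℝ)).2 hc1
          rwa [Nat.cast_sub hc3] at this
        rw [hCsC] at this
        exact this
      calc ∑ v ∈ U.filter p, ((L v \ Cs).card : ℝ)
          ≤ (U.filter p).card • ((A.card : ℝ) - C) := Finset.sum_le_card_nsmul _ _ _ hterm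
        _ = ((U.filter p).card : ℝ) * ((A.card : ℝ) - C) := by rw [nsmul_eq_mul]
        _ ≤ 1 * ((A.card : ℝ) - C) := by
            exact mul_le_mul_of_nonneg_right hS1 hM0
        _ = (A.card : ℝ) - C := one_mul _
    -- bound on small terms
    have hsmall : ∑ v ∈ U.filter (fun v => ¬ p v), ((L v \ Cs).card : ℝ) < δ * C := by
      have hterm : ∀ v ∈ U.filter (fun v => ¬ p v), ((L v \ Cs).card : ℝ) ≤ t := by
        intro v hv
        have := (Finset.mem_filter.1 hv).2
        simpa [hpdef] using not_lt.1 this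
      have h1 : ∑ v ∈ U.filter (fun v => ¬ p v), ((L v \ Cs).card : ℝ)
          ≤ ((U.filter (fun v => ¬ p v)).card : ℝ) * t := by
        have := Finset.sum_le_card_nsmul _ _ _ hterm
        rwa [nsmul_eq_mul] at this
      have h2 : ((U.filter (fun v => ¬ p v)).card : ℝ) ≤ (U.card : ℝ) := by
        exact_mod_cast Finset.card_le_card (Finset.filter_subset _ _)
      have h3 : ((U.filter (fun v => ¬ p v)).card : ℝ) * t ≤ (U.card : ℝ) * t :=
        mul_le_mul_of_nonneg_right h2 ht0.le
      have h4 : (U.card : ℝ) * t < (80 / δ ^ 2) * t :=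
        mul_lt_mul_of_pos_right hU80 ht0
      have h5 : (80 / δ ^ 2) * t = δ * C := by
        rw [htdef]
        field_simp
      linarith
    have hexp : (2 - δ) * (C:ℝ) = 2 * C - δ * C := by ring
    linarith
  obtain ⟨a, ha, b, hb, hab⟩ := Finset.one_lt_card.1 (by omega : 1 < (U.filter p).card)
  refine ⟨a, (Finset.mem_filter.1 ha).1, b, (Finset.mem_filter.1 hb).1, hab,
    (Finset.mem_filter.1 ha).2, (Finset.mem_filter.1 hb).2⟩
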